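/- Let n ≥ d > 1 be powers of 2 and m = p_1^{e_1}⋯p_k^{e_k} with each prime p_i ≡ 2d+1 (mod 4d). Then x^n + 1 factors modulo m as the product ∏_{j=0}^{d-1}(x^{n/d} - α_j) for distinct units α_j ∈ ℤ_m*. -/

import Mathlib

open Polynomial Finset

-- Square roots of 1 modulo an odd prime power are ±1.
lemma sq_roots_one {p e : ℕ} (hp : p.Prime) (hp2 : p ≠ 2) (he : 0 < e)
    (x : ZMod (p ^ e)) (hx : x ^ 2 = 1) : x = 1 ∨ x = -1 := by
  obtain ⟨a, rfl⟩ := ZMod.intCast_surjective x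
  have hdvd : ((p : ℤ)) ^ e ∣ (a - 1) * (a + 1) := by
    have : ((a ^ 2 - 1 : ℤ) : ZMod (p ^ e)) = 0 := by push_cast; rw [hx]; ring
    have := (ZMod.intCast_zmod_eq_zero_iff_dvd _ _).mp this
    have h2 : (a - 1) * (a + 1) = a ^ 2 - 1 := by ring
    rw [h2]
    exact_mod_cast this
  have hpp : Prime (p : ℤ) := Nat.prime_iff_prime_int.mp hp
  have hpd : (p : ℤ) ∣ (a - 1) * (a + 1) := dvd_trans (dvd_pow_self _ he.ne') hdvd
  have hnot : ¬ ((p : ℤ) ∣ a - 1 ∧ (p : ℤ) ∣ a + 1) := by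
    rintro ⟨h1, h2⟩
    have : (p : ℤ) ∣ 2 := by have := dvd_sub h2 h1; simpa using this
    have : (p : ℕ) ∣ 2 := by exact_mod_cast this
    exact hp2 ((Nat.prime_dvd_prime_iff_eq hp Nat.prime_two).mp this)
  rcases hpp.dvd_mul.mp hpd with h | h
  · left
    have hcop : IsCoprime ((p : ℤ) ^ e) (a + 1) :=
      (IsCoprime.pow_left ((hpp.coprime_iff_not_dvd).mpr (fun hc => hnot ⟨h, hc⟩)))
    have : ((p : ℤ)) ^ e ∣ a - 1 := hcop.dvd_of_dvd_mul_right hdvd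
    have : ((a - 1 : ℤ) : ZMod (p ^ e)) = 0 := by
      rw [ZMod.intCast_zmod_eq_zero_iff_dvd]; exact_mod_cast this
    push_cast at this
    linear_combination this
  · right
    have hcop : IsCoprime ((p : ℤ) ^ e) (a - 1) :=
      (IsCoprime.pow_left ((hpp.coprime_iff_not_dvd).mpr (fun hc => hnot ⟨hc, h⟩)))
    have : ((p : ℤ)) ^ e ∣ a + 1 := by
      rw [mul_comm] at hdvd; exact hcop.dvd_of_dvd_mul_right hdvd
    have : ((a + 1 : ℤ) : ZMod (p ^ e)) = 0 := by
      rw [ZMod.intCast_zmod_eq_zero_iff_dvd]; exact_mod_cast this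
    push_cast at this
    linear_combination this

-- Counting: at most 2^k solutions of x^(2^k) = 1 in a group with at most two square roots of 1.
lemma count_pow_two_le {G : Type*} [CommGroup G] [Fintype G] [DecidableEq G]
    (g₀ : G) (h2 : ∀ x : G, x ^ 2 = 1 → x = 1 ∨ x = g₀) :
    ∀ k : ℕ, (univ.filter fun x : G => x ^ (2 ^ k) = 1).card ≤ 2 ^ k := by
  intro k
  induction k with
  | zero =>
    have : (univ.filter fun x : G => x ^ (2 ^ 0) = 1) ⊆ {1} := by
      intro x hx
      simp only [mem_filter, pow_zero, pow_one] at hx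
      simp [hx.2]
    simpa using Finset.card_le_card this
  | succ k ih =>
    set S := univ.filter fun x : G => x ^ (2 ^ (k + 1)) = 1 with hS
    have key : S.card ≤ 2 * (S.image (fun x => x ^ 2)).card := by
      apply Finset.card_le_mul_card_image
      intro a ha
      obtain ⟨x₀, _, hx₀⟩ := Finset.mem_image.mp ha
      have hsub : (S.filter fun x => x ^ 2 = a) ⊆ {x₀, g₀ * x₀} := by
        intro x hx
        simp only [mem_filter] at hx
        have : (x * x₀⁻¹) ^ 2 = 1 := by
          rw [mul_pow, hx.2, ← hx₀]
          group
        rcases h2 _ this with h | h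
        · have : x = x₀ := mul_inv_eq_one.mp h
          simp [this]
        · have : x = g₀ * x₀ := by rw [← h]; group
          simp [this]
      calc (S.filter fun x => x ^ 2 = a).card ≤ _ := Finset.card_le_card hsub
        _ ≤ 2 := Finset.card_insert_le _ _ |>.trans (by simp)
    have himg : S.image (fun x => x ^ 2) ⊆ univ.filter fun x : G => x ^ (2 ^ k) = 1 := by
      intro a ha
      obtain ⟨x, hx, rfl⟩ := Finset.mem_image.mp ha
      simp only [hS, mem_filter] at hx ⊢
      refine ⟨mem_univ _, ?_⟩
      rw [← pow_mul, show 2 * 2 ^ k = 2 ^ (k+1) by ring]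
      exact hx.2
    calc S.card ≤ 2 * (S.image (fun x => x ^ 2)).card := key
      _ ≤ 2 * 2 ^ k := Nat.mul_le_mul_left 2 ((Finset.card_le_card himg).trans ih)
      _ = 2 ^ (k + 1) := by ring

-- Existence of a 2^(k+1)-st root of unity hitting g₀.
lemma exists_pow_eq_g₀ {G : Type*} [CommGroup G] [Fintype G] [DecidableEq G]
    (g₀ : G) (h2 : ∀ x : G, x ^ 2 = 1 → x = 1 ∨ x = g₀)
    (k : ℕ) (hdvd : 2 ^ (k + 1) ∣ Fintype.card G) : ∃ x : G, x ^ (2 ^ k) = g₀ := by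
  haveI : Fact (Nat.Prime 2) := ⟨Nat.prime_two⟩
  obtain ⟨P⟩ : Nonempty (Sylow 2 G) := Sylow.nonempty
  set r := (Nat.card G).factorization 2 with hr
  have hcardP : Nat.card P = 2 ^ r := Sylow.card_eq_multiplicity P
  have hkr : k + 1 ≤ r := by
    rw [hr]
    refine (Nat.Prime.pow_dvd_iff_le_factorization Nat.prime_two ?_).mp ?_
    · exact Nat.card_pos.ne'
    · rwa [Nat.card_eq_fintype_card]
  have hr1 : 1 ≤ r := le_trans (by omega) hkr
  haveI : Fintype (P : Subgroup G) := Fintype.ofFinite _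
  have hex : ∃ x : (P : Subgroup G), ((x : G)) ^ (2 ^ (r - 1)) ≠ 1 := by
    by_contra hcon
    push_neg at hcon
    have hsub : ∀ x : (P : Subgroup G),
        (x : G) ∈ univ.filter fun y : G => y ^ (2 ^ (r-1)) = 1 := by
      intro x
      simp [hcon x]
    have hle : Fintype.card (P : Subgroup G) ≤
        (univ.filter fun y : G => y ^ (2 ^ (r-1)) = 1).card := by
      rw [← Fintype.card_coe]
      apply Fintype.card_le_of_injective (fun (x : (P : Subgroup G)) =>
        (⟨(x : G), hsub x⟩ : {y // y ∈ univ.filter fun y : G => y ^ (2 ^ (r-1)) = 1}))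
      intro a b hab
      simp only [Subtype.mk.injEq] at hab
      exact Subtype.val_injective hab
    have hcount := count_pow_two_le g₀ h2 (r - 1)
    have hPc : Fintype.card (P : Subgroup G) = 2 ^ r := by
      rw [← Nat.card_eq_fintype_card]; exact hcardP
    rw [hPc] at hle
    have : 2 ^ r ≤ 2 ^ (r - 1) := le_trans hle hcount
    have := Nat.pow_lt_pow_right (show 1 < 2 by omega) (show r - 1 < r by omega)
    omega
  obtain ⟨x, hx⟩ := hex
  have hx2r : (x : G) ^ (2 ^ r) = 1 := by
    have : x ^ (Nat.card (P : Subgroup G)) = 1 := pow_card_eq_one'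
    have := congrArg (Subtype.val) this
    push_cast at this
    rwa [show Nat.card (P : Subgroup G) = 2 ^ r from hcardP] at this
  have hy2 : ((x : G) ^ (2 ^ (r - 1))) ^ 2 = 1 := by
    rw [← pow_mul, ← pow_succ, show r - 1 + 1 = r by omega]
    exact hx2r
  rcases h2 _ hy2 with h | h
  · exact absurd h hx
  · refine ⟨(x : G) ^ (2 ^ (r - 1 - k)), ?_⟩
    rw [← pow_mul, ← pow_add, show r - 1 - k + k = r - 1 by omega]
    exact h

-- A 2^t-th root of -1 modulo an odd prime power.
lemma exists_zeta_prime_pow {p e t : ℕ} (hp : p.Prime) (hp2 : p ≠ 2) (he : 0 < e)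
    (hdvd : 2 ^ (t + 1) ∣ p - 1) : ∃ ζ : ZMod (p ^ e), ζ ^ (2 ^ t) = -1 := by
  haveI : Fact p.Prime := ⟨hp⟩
  haveI : NeZero (p ^ e) := ⟨pow_ne_zero e hp.pos.ne'⟩
  have hp3 : 3 ≤ p := by have := hp.two_le; omega
  have h2pe : 2 < p ^ e := by
    calc 2 < p := by omega
    _ ≤ p ^ e := Nat.le_self_pow he.ne' p
  haveI : Fact (2 < p ^ e) := ⟨h2pe⟩
  have hne1 : ((-1 : (ZMod (p ^ e))ˣ)) ≠ 1 := by
    intro h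
    have := congrArg (Units.val) h
    simp only [Units.val_neg, Units.val_one] at this
    exact ZMod.neg_one_ne_one this
  have h2 : ∀ u : (ZMod (p ^ e))ˣ, u ^ 2 = 1 → u = 1 ∨ u = -1 := by
    intro u hu
    have : ((u : ZMod (p ^ e))) ^ 2 = 1 := by
      rw [← Units.val_pow_eq_pow_val, hu, Units.val_one]
    rcases sq_roots_one hp hp2 he _ this with h | h
    · left; exact Units.ext h
    · right; apply Units.ext; rw [h]; simp
  have hcard : Fintype.card (ZMod (p ^ e))ˣ = (p ^ e).totient := ZMod.card_units_eq_totient _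
  have hdvd2 : 2 ^ (t + 1) ∣ Fintype.card (ZMod (p ^ e))ˣ := by
    rw [hcard, Nat.totient_prime_pow hp he]
    exact Dvd.dvd.mul_left hdvd _
  obtain ⟨u, hu⟩ := exists_pow_eq_g₀ (-1 : (ZMod (p ^ e))ˣ) h2 t hdvd2
  refine ⟨(u : ZMod (p ^ e)), ?_⟩
  rw [← Units.val_pow_eq_pow_val, hu]
  simp

-- A 2^t-th root of -1 modulo m, via CRT.
lemma exists_zeta (t : ℕ) :
    ∀ m : ℕ, 2 ≤ m → (∀ p ∈ m.primeFactors, p ≠ 2 ∧ 2 ^ (t + 1) ∣ p - 1) →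
      ∃ ζ : ZMod m, ζ ^ (2 ^ t) = -1 := by
  intro m
  induction m using Nat.recOnPosPrimePosCoprime with
  | prime_pow p n hp hn =>
    intro _ hfac
    have hpp : p.Prime := hp
    have hmem : p ∈ (p ^ n).primeFactors := by
      rw [Nat.primeFactors_prime_pow hn.ne' hpp]
      simp
    obtain ⟨hp2, hdvd⟩ := hfac p hmem
    exact exists_zeta_prime_pow hpp hp2 hn hdvd
  | zero => intro h; omega
  | one => intro h; omega
  | coprime a b ha hb hab iha ihb =>
    intro _ hfac
    have ha0 : a ≠ 0 := by omega
    have hb0 : b ≠ 0 := by omega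
    have hfa : ∀ p ∈ a.primeFactors, p ≠ 2 ∧ 2 ^ (t + 1) ∣ p - 1 := fun p hpmem =>
      hfac p (Nat.primeFactors_mul ha0 hb0 ▸ Finset.mem_union_left _ hpmem)
    have hfb : ∀ p ∈ b.primeFactors, p ≠ 2 ∧ 2 ^ (t + 1) ∣ p - 1 := fun p hpmem =>
      hfac p (Nat.primeFactors_mul ha0 hb0 ▸ Finset.mem_union_right _ hpmem)
    obtain ⟨ζa, hζa⟩ := iha (by omega) hfa
    obtain ⟨ζb, hζb⟩ := ihb (by omega) hfb
    set eqv := ZMod.chineseRemainder hab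
    refine ⟨eqv.symm (ζa, ζb), ?_⟩
    rw [← map_pow]
    have : ((ζa, ζb) : ZMod a × ZMod b) ^ (2 ^ t) = -1 := by
      rw [Prod.pow_mk, hζa, hζb]; rfl
    rw [this, map_neg, map_one]

-- Product identity.
lemma prod_X_sub_C_pow {R : Type*} [CommRing R] :
    ∀ (t : ℕ) (z : R), z ^ (2 ^ t) = -1 →
      ∏ j ∈ Finset.range (2 ^ t), (X - C (z ^ (2 * j + 1))) = X ^ (2 ^ t) + 1 := by
  intro t
  induction t with
  | zero =>
    intro z hz
    rw [pow_zero] at hz ⊢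
    rw [pow_one] at hz
    simp [hz, Finset.prod_range_one, sub_neg_eq_add]
  | succ t ih =>
    intro z hz
    have hz2 : (z ^ 2) ^ (2 ^ t) = -1 := by
      rw [← pow_mul, show 2 * 2 ^ t = 2 ^ (t + 1) by ring]
      exact hz
    have IH := ih (z ^ 2) hz2
    have key : ∀ j : ℕ, (X - C (z ^ (2 * j + 1))) * (X - C (z ^ (2 * (2 ^ t + j) + 1)))
        = X ^ 2 - C ((z ^ 2) ^ (2 * j + 1)) := by
      intro j
      have h1 : z ^ (2 * (2 ^ t + j) + 1) = -(z ^ (2 * j + 1)) := by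
        rw [show 2 * (2 ^ t + j) + 1 = 2 ^ (t + 1) + (2 * j + 1) by ring, pow_add, hz]
        ring
      have h2 : (z ^ 2) ^ (2 * j + 1) = (z ^ (2 * j + 1)) ^ 2 := by
        rw [← pow_mul, ← pow_mul]; ring_nf
      have key0 : ∀ c : R[X], (X - c) * (X + c) = X ^ 2 - c ^ 2 := fun c => by ring
      rw [h1, map_neg, sub_neg_eq_add, key0, h2]
      simp [map_pow]
    have split : ∏ j ∈ Finset.range (2 ^ (t + 1)), (X - C (z ^ (2 * j + 1)))
        = ∏ j ∈ Finset.range (2 ^ t), (X ^ 2 - C ((z ^ 2) ^ (2 * j + 1))) := by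
      rw [show 2 ^ (t + 1) = 2 ^ t + 2 ^ t by ring, Finset.prod_range_add,
        ← Finset.prod_mul_distrib]
      exact Finset.prod_congr rfl fun j _ => key j
    rw [split]
    have := congrArg (aeval (X ^ 2 : R[X])) IH
    simp only [map_prod, map_sub, map_add, map_one, aeval_X_pow, aeval_X, aeval_C,
      algebraMap_eq] at this
    rw [this, ← pow_mul, show 2 * 2 ^ t = 2 ^ (t+1) by ring]

theorem xn_add_one_factors {s tt n d m : ℕ}
    (hn : n = 2 ^ s) (hd : d = 2 ^ tt) (htt : 1 ≤ tt) (hsd : d ≤ n)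
    (hm : 2 ≤ m)
    (hprimes : ∀ p ∈ m.primeFactors, p % (4 * d) = (2 * d + 1) % (4 * d)) :
    ∃ α : Fin d → ZMod m,
      Function.Injective α ∧ (∀ j, IsUnit (α j)) ∧
      (X ^ n + 1 : (ZMod m)[X]) = ∏ j : Fin d, (X ^ (n / d) - C (α j)) := by
  have hd2 : 2 ≤ d := by rw [hd]; calc 2 = 2 ^ 1 := by norm_num
                                       _ ≤ 2 ^ tt := Nat.pow_le_pow_right (by omega) htt
  have htts : tt ≤ s := by
    rw [hn, hd] at hsd
    exact (Nat.pow_le_pow_iff_right (by omega)).mp hsd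
  have hdn : d ∣ n := by rw [hn, hd]; exact pow_dvd_pow 2 htts
  have h2d : 2 * d = 2 ^ (tt + 1) := by rw [hd, pow_succ]; ring
  -- translate prime condition
  have H : ∀ p ∈ m.primeFactors, p ≠ 2 ∧ 2 ^ (tt + 1) ∣ p - 1 := by
    intro p hpmem
    have hp := hprimes p hpmem
    have hlt : 2 * d + 1 < 4 * d := by omega
    rw [Nat.mod_eq_of_lt hlt] at hp
    have hq := Nat.div_add_mod p (4 * d)
    set q := p / (4 * d) with hqdef
    have hpeq : p = 4 * d * q + (2 * d + 1) := by omega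
    constructor
    · have : 2 * d + 1 ≤ p := by rw [hpeq]; omega
      omega
    · refine ⟨2 * q + 1, ?_⟩
      have hh : 2 ^ (tt + 1) * (2 * q + 1) = 4 * d * q + 2 * d := by
        rw [← h2d]; ring
      omega
  -- the root of -1
  obtain ⟨ζ, hζ'⟩ := exists_zeta tt m hm H
  have hζ : ζ ^ d = -1 := by rw [hd]; exact hζ'
  have hζ2d : ζ ^ (2 * d) = 1 := by
    rw [show 2 * d = d * 2 by ring, pow_mul, hζ, neg_one_sq]
  have hζu : IsUnit ζ := by
    apply IsUnit.of_mul_eq_one (a := ζ) (ζ ^ (2 * d - 1))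
    rw [mul_comm, ← pow_succ, show 2 * d - 1 + 1 = 2 * d by omega]
    exact hζ2d
  refine ⟨fun j : Fin d => ζ ^ (2 * (j : ℕ) + 1), ?_, fun j => hζu.pow _, ?_⟩
  · -- injectivity
    obtain ⟨p, hpmem⟩ := Nat.nonempty_primeFactors.mpr (show 1 < m by omega)
    have hp : p.Prime := Nat.prime_of_mem_primeFactors hpmem
    have hpdvd : p ∣ m := Nat.dvd_of_mem_primeFactors hpmem
    haveI : Fact p.Prime := ⟨hp⟩
    have hp2 : p ≠ 2 := (H p hpmem).1
    have h2p : 2 < p := by have := hp.two_le; omega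
    haveI : Fact (2 < p) := ⟨h2p⟩
    set φ := ZMod.castHom hpdvd (ZMod p) with hφ
    set z := φ ζ with hzdef
    have hzd : z ^ d = -1 := by rw [hzdef, ← map_pow, hζ, map_neg, map_one]
    have hne : (-1 : ZMod p) ≠ 1 := ZMod.neg_one_ne_one
    have hz2d : z ^ (2 * d) = 1 := by
      rw [show 2 * d = d * 2 by ring, pow_mul, hzd, neg_one_sq]
    have hzu : IsUnit z := hζu.map φ
    have horder : orderOf z = 2 ^ (tt + 1) := by
      have hdvd : orderOf z ∣ 2 ^ (tt + 1) := by
        apply orderOf_dvd_of_pow_eq_one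
        rw [← h2d]; exact hz2d
      obtain ⟨j, hj, hoz⟩ := (Nat.dvd_prime_pow Nat.prime_two).mp hdvd
      have hjeq : j = tt + 1 := by
        by_contra hjj
        have hjle : j ≤ tt := by omega
        have : orderOf z ∣ 2 ^ tt := hoz ▸ pow_dvd_pow 2 hjle
        have : z ^ (2 ^ tt) = 1 := orderOf_dvd_iff_pow_eq_one.mp this
        rw [← hd] at this
        rw [hzd] at this
        exact hne this
      rw [hoz, hjeq]
    have key : ∀ i j : Fin d, (i : ℕ) < (j : ℕ) →
        ζ ^ (2 * (i : ℕ) + 1) ≠ ζ ^ (2 * (j : ℕ) + 1) := by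
      intro i j hij heq
      have heq' : z ^ (2 * (i : ℕ) + 1) = z ^ (2 * (j : ℕ) + 1) := by
        rw [hzdef, ← map_pow, ← map_pow, heq]
      have hone : z ^ (2 * ((j : ℕ) - (i : ℕ))) = 1 := by
        have h' : z ^ (2 * (i : ℕ) + 1) * z ^ (2 * ((j : ℕ) - (i : ℕ)))
            = z ^ (2 * (i : ℕ) + 1) * 1 := by
          rw [mul_one, ← pow_add, show 2 * (i : ℕ) + 1 + 2 * ((j : ℕ) - (i : ℕ))
            = 2 * (j : ℕ) + 1 by omega]
          exact heq'.symm
        exact (hzu.pow _).mul_left_cancel h'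
      have hodvd : orderOf z ∣ 2 * ((j : ℕ) - (i : ℕ)) := orderOf_dvd_of_pow_eq_one hone
      rw [horder] at hodvd
      have h2dvd : 2 ^ tt ∣ ((j : ℕ) - (i : ℕ)) := by
        have : 2 * 2 ^ tt ∣ 2 * ((j : ℕ) - (i : ℕ)) := by
          rw [← pow_succ']; exact hodvd
        exact (Nat.mul_dvd_mul_iff_left (show 0 < 2 by omega)).mp this
      have hle : 2 ^ tt ≤ (j : ℕ) - (i : ℕ) := Nat.le_of_dvd (by omega) h2dvd
      have hjd : (j : ℕ) < 2 ^ tt := by rw [← hd]; exact j.isLt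
      omega
    intro i j hij
    by_contra hne'
    have hvne : (i : ℕ) ≠ (j : ℕ) := fun hc => hne' (Fin.ext hc)
    rcases hvne.lt_or_gt with h | h
    · exact key i j h hij
    · exact key j i h hij.symm
  · -- the product identity
    have hpoly := prod_X_sub_C_pow (R := ZMod m) tt ζ hζ'
    rw [← hd] at hpoly
    have hmain := congrArg (aeval (X ^ (n / d) : (ZMod m)[X])) hpoly
    simp only [map_prod, map_sub, map_add, map_one, aeval_X_pow, aeval_X, aeval_C,
      algebraMap_eq] at hmain
    rw [← pow_mul, Nat.div_mul_cancel hdn] at hmain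
    rw [Fin.prod_univ_eq_prod_range (fun j => (X : (ZMod m)[X]) ^ (n / d)
      - C (ζ ^ (2 * j + 1))) d]
    exact hmain.symm
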